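/- Let M be an n×n real symmetric matrix, g a real polynomial, and x ∈ ℝⁿ a vector with M.mulVec x ≠ 0. For t ∈ ℝ define the filtered signal y_t = (M + t • g(M)).mulVec x, so y_0 = M.mulVec x. Then there exist C ≥ 0 and δ > 0 such that for all t with |t| < δ, the vector y_t is nonzero and ⟪y_0, y_t⟫ ≥ (1 − C·t²) · ‖y_0‖ · ‖y_t‖; i.e., the cosine similarity between the unperturbed filtered signal M x and the polynomial-augmented filtered signal (M + t·g(M)) x is at least 1 − C·t² for all sufficiently small t. -/

import Mathlib

open Matrix


private lemma aux_cosine (nu ny i d t : ℝ) (hu : 0 < nu) (hd : 0 ≤ d)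
    (hpi : i ≤ nu * ny) (hi2 : nu ^ 2 / 2 ≤ i)
    (hkey : nu ^ 2 * ny ^ 2 - i ^ 2 = t ^ 2 * d) :
    (1 - 4 * d / nu ^ 4 * t ^ 2) * (nu * ny) ≤ i := by
  set c : ℝ := 4 * d / nu ^ 4 with hcdef
  set P : ℝ := nu * ny with hP
  have h2 : P ^ 2 - i ^ 2 = t ^ 2 * d := by rw [hP, mul_pow]; exact hkey
  have h4 : (P - i) * nu ^ 2 ≤ t ^ 2 * d := by
    nlinarith [mul_nonneg (sub_nonneg.mpr hpi) (by linarith : (0:ℝ) ≤ P + i - nu ^ 2)]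
  have h5 : nu ^ 2 / 2 ≤ P := le_trans hi2 hpi
  have hDt : (0:ℝ) ≤ d * t ^ 2 := mul_nonneg hd (sq_nonneg t)
  have h6 : t ^ 2 * d * nu ^ 2 ≤ c * t ^ 2 * P * nu ^ 4 := by
    have hcc : c * t ^ 2 * P * nu ^ 4 = 4 * d * (t ^ 2 * P) := by
      rw [hcdef]; field_simp
    nlinarith [mul_le_mul_of_nonneg_left h5 hDt]
  have h7 : (P - i) * nu ^ 4 ≤ c * t ^ 2 * P * nu ^ 4 := by
    calc (P - i) * nu ^ 4 = (P - i) * nu ^ 2 * nu ^ 2 := by ring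
      _ ≤ t ^ 2 * d * nu ^ 2 := mul_le_mul_of_nonneg_right h4 (by positivity)
      _ ≤ c * t ^ 2 * P * nu ^ 4 := h6
  have h8 : P - i ≤ c * t ^ 2 * P := le_of_mul_le_mul_right h7 (by positivity)
  nlinarith [h8]

/-- Noise-free stability of the polynomial-augmented graph filter: for a symmetric matrix `M`,
a polynomial `g`, and a signal `x` with `M x ≠ 0`, the cosine similarity between the filtered
signals `M x` and `(M + t • g(M)) x` is at least `1 - C t²` for all sufficiently small `t`. -/
theorem filtered_signal_cosine_similarity_bound
    (n : ℕ) (M : Matrix (Fin n) (Fin n) ℝ) (hM : Mᵀ = M) (g : Polynomial ℝ)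
    (x : Fin n → ℝ) (hx : M.mulVec x ≠ 0) :
    ∃ C : ℝ, 0 ≤ C ∧ ∃ δ : ℝ, 0 < δ ∧ ∀ t : ℝ, |t| < δ →
      (M + t • Polynomial.aeval M g).mulVec x ≠ 0 ∧
      (1 - C * t ^ 2) *
          (‖(WithLp.equiv 2 (Fin n → ℝ)).symm (M.mulVec x)‖ *
            ‖(WithLp.equiv 2 (Fin n → ℝ)).symm ((M + t • Polynomial.aeval M g).mulVec x)‖) ≤
        (inner ℝ ((WithLp.equiv 2 (Fin n → ℝ)).symm (M.mulVec x))
            ((WithLp.equiv 2 (Fin n → ℝ)).symm ((M + t • Polynomial.aeval M g).mulVec x)) : ℝ) := by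
  classical
  set U : EuclideanSpace ℝ (Fin n) := (WithLp.equiv 2 (Fin n → ℝ)).symm (M.mulVec x) with hUdef
  set V : EuclideanSpace ℝ (Fin n) :=
    (WithLp.equiv 2 (Fin n → ℝ)).symm ((Polynomial.aeval M g).mulVec x) with hVdef
  have hUne : U ≠ 0 := fun h => hx (by simpa [hUdef] using congrArg (WithLp.equiv 2 (Fin n → ℝ)) h)
  have hU : (0:ℝ) < ‖U‖ := norm_pos_iff.mpr hUne
  set D : ℝ := ‖U‖^2 * ‖V‖^2 - (inner ℝ U V : ℝ)^2 with hDdef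
  have hD : 0 ≤ D := by
    have h := abs_real_inner_le_norm U V
    nlinarith [abs_nonneg (inner ℝ U V : ℝ), sq_abs (inner ℝ U V : ℝ), norm_nonneg U, norm_nonneg V]
  refine ⟨4 * D / ‖U‖^4, by positivity, ‖U‖ / (2 * (‖V‖ + 1)), by positivity, ?_⟩
  intro t ht
  have hC : (4 * D / ‖U‖^4) * ‖U‖^4 = 4 * D := div_mul_cancel₀ _ (by positivity)
  have hYeq : (WithLp.equiv 2 (Fin n → ℝ)).symm ((M + t • Polynomial.aeval M g).mulVec x)
      = U + t • V := by
    simp only [Matrix.add_mulVec, Matrix.smul_mulVec, hUdef, hVdef]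
    rfl
  have hI : (inner ℝ U (U + t • V) : ℝ) = ‖U‖^2 + t * (inner ℝ U V : ℝ) := by
    rw [inner_add_right, real_inner_smul_right, real_inner_self_eq_norm_sq]
  have hN : ‖U + t • V‖^2 = ‖U‖^2 + 2*(t*(inner ℝ U V : ℝ)) + t^2*‖V‖^2 := by
    rw [@norm_add_sq_real, real_inner_smul_right, norm_smul]
    simp [Real.norm_eq_abs, mul_pow, sq_abs]
  have htv : |t| * (‖V‖ + 1) < ‖U‖ / 2 := by
    have h1 : (0:ℝ) < 2 * (‖V‖ + 1) := by positivity
    rw [lt_div_iff₀ h1] at ht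
    nlinarith
  have habs : |t * (inner ℝ U V : ℝ)| ≤ |t| * (‖U‖ * ‖V‖) := by
    rw [abs_mul]
    exact mul_le_mul_of_nonneg_left (abs_real_inner_le_norm U V) (abs_nonneg t)
  have hI2 : ‖U‖^2 / 2 ≤ (inner ℝ U (U + t • V) : ℝ) := by
    rw [hI]
    have := abs_le.mp habs
    nlinarith [abs_nonneg t]
  have hIpos : (0:ℝ) < (inner ℝ U (U + t • V) : ℝ) := by nlinarith
  have hYne : U + t • V ≠ 0 := by
    intro h
    rw [h, inner_zero_right] at hIpos
    exact lt_irrefl _ hIpos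
  have hPI : (inner ℝ U (U + t • V) : ℝ) ≤ ‖U‖ * ‖U + t • V‖ := real_inner_le_norm U _
  have hYn : ‖U‖ / 2 ≤ ‖U + t • V‖ := by nlinarith
  have hkey : ‖U‖^2 * ‖U + t • V‖^2 - (inner ℝ U (U + t • V) : ℝ)^2 = t^2 * D := by
    rw [hN, hI, hDdef]; ring
  constructor
  · intro h
    apply hYne
    rw [← hYeq, h]
    rfl
  · rw [hYeq]
    exact aux_cosine ‖U‖ ‖U + t • V‖ _ D t hU hD hPI hI2 hkey
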